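/- Assume k ≥ 2 and let T′ ⊆ ker D be the union of the four families: (1) f_{i,j} for 1 ≤ j ≤ k and 0 ≤ i ≤ ⌊n_j/2⌋; (2) ε_{s_{i₂,j₂}}(x_{i₁,j₁}) for 1 ≤ j₁ < j₂ ≤ k, ⌊(n_{j₁}−1)/2⌋ < i₁ ≤ n_{j₁}, 0 ≤ i₂ ≤ ⌊(n_{j₂}−1)/2⌋; (3) ε_{s_{i₂,j}}(x_{i₁,j}) for 1 ≤ j ≤ k, 0 ≤ i₂ ≤ ⌊(n_j−1)/2⌋, i₂ ≤ i₁ ≤ n_j; (4) ε_{s_{i₂,j₂}}(x_{i₁,j₁}) for 1 ≤ j₂ < j₁ ≤ k, 0 ≤ i₁ ≤ n_{j₁}, 0 ≤ i₂ ≤ ⌊(n_{j₂}−1)/2⌋. Let Z ⊆ V be the set of points v = (a_{i,j}) with a_{i,j} = 0 for all 1 ≤ j ≤ k and all 0 ≤ i ≤ ⌊(n_j−1)/2⌋. Then T′ separates every pair of points not simultaneously lying in Z: if v, w ∈ V are such that not both v ∈ Z and w ∈ Z, and f(v) ≠ f(w) for some f ∈ ker D, then there exists t ∈ T′ with t(v)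 ≠ t(w). -/

import Mathlib

open MvPolynomial Finset

variable (𝕜 : Type) [Field 𝕜] [CharZero 𝕜] (k : ℕ) (n : Fin k → ℕ)

/- STATEMENT 12: the families (1)-(4) of invariants separate every pair of points not
simultaneously lying in the zero set `Z` of the variables `x_{i,j}`, `0 ≤ i ≤ ⌊(n_j-1)/2⌋`. -/

/-- The variable `x_{i,j}` (as `X ⟨j,i⟩`), or `0` if `i` is out of range. -/
noncomputable def Xv (j : Fin k) (i : ℕ) : MvPolynomial (Σ j : Fin k, Fin (n j + 1)) 𝕜 :=
  if h : i ≤ n j then MvPolynomial.X ⟨j, ⟨i, Nat.lt_succ_of_le h⟩⟩ else 0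

/-- The Weitzenböck derivation `D` with `D x_{0,j} = 0` and `D x_{i,j} = x_{i-1,j}`. -/
noncomputable def Dw : Derivation 𝕜 (MvPolynomial (Σ j : Fin k, Fin (n j + 1)) 𝕜)
    (MvPolynomial (Σ j : Fin k, Fin (n j + 1)) 𝕜) :=
  mkDerivation 𝕜 fun v => if (v.2 : ℕ) = 0 then 0 else Xv 𝕜 k n v.1 ((v.2 : ℕ) - 1)

/-- The invariants `f_{i,j}`. -/
noncomputable def fP (j : Fin k) (i : ℕ) : MvPolynomial (Σ j : Fin k, Fin (n j + 1)) 𝕜 :=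
  if i = 0 then Xv 𝕜 k n j 0
  else (∑ q ∈ Finset.range i, C ((-1 : 𝕜) ^ q) * Xv 𝕜 k n j q * Xv 𝕜 k n j (2 * i - q))
    + C ((-1 : 𝕜) ^ i / 2) * Xv 𝕜 k n j i ^ 2

/-- The local slices `s_{i,j}`. -/
noncomputable def sP (j : Fin k) (i : ℕ) : MvPolynomial (Σ j : Fin k, Fin (n j + 1)) 𝕜 :=
  if i = 0 then Xv 𝕜 k n j 1
  else ∑ q ∈ Finset.range (i + 1),
    C ((-1 : 𝕜) ^ q * ((2 * i + 1 - 2 * q : ℕ) : 𝕜) / 2) * Xv 𝕜 k n j q * Xv 𝕜 k n j (2 * i + 1 - q)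

/-- `ε_s(f) = ∑_{q=0}^{ν} ((-1)^q/q!) (D^q f) s^q (D s)^{ν - q}`. -/
noncomputable def eps (s f : MvPolynomial (Σ j : Fin k, Fin (n j + 1)) 𝕜) (ν : ℕ) :
    MvPolynomial (Σ j : Fin k, Fin (n j + 1)) 𝕜 :=
  ∑ q ∈ Finset.range (ν + 1),
    C ((-1 : 𝕜) ^ q / (q.factorial : 𝕜)) * ((⇑(Dw 𝕜 k n))^[q] f) * s ^ q *
      (Dw 𝕜 k n s) ^ (ν - q)

set_option maxRecDepth 4000

namespace Sep

set_option linter.unusedSectionVars false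

variable {𝕜 k n}

/-- coordinate access with out-of-range = 0 -/
def uc (v : (Σ j : Fin k, Fin (n j + 1)) → 𝕜) (j : Fin k) (i : ℕ) : 𝕜 :=
  if h : i ≤ n j then v ⟨j, ⟨i, Nat.lt_succ_of_le h⟩⟩ else 0

lemma uc_eq {v : (Σ j : Fin k, Fin (n j + 1)) → 𝕜} (j : Fin k) (i : Fin (n j + 1)) :
    uc v j (i : ℕ) = v ⟨j, i⟩ := by
  have h : (i : ℕ) ≤ n j := Nat.lt_succ_iff.mp i.isLt
  simp only [uc, dif_pos h]

lemma eval_Xv (v : (Σ j : Fin k, Fin (n j + 1)) → 𝕜) (j : Fin k) (i : ℕ) :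
    eval v (Xv 𝕜 k n j i) = uc v j i := by
  unfold Xv uc
  by_cases h : i ≤ n j <;> simp [h]

lemma Dw_Xv {j : Fin k} {i : ℕ} (h : i ≤ n j) :
    Dw 𝕜 k n (Xv 𝕜 k n j i) = if i = 0 then 0 else Xv 𝕜 k n j (i - 1) := by
  rw [Xv, dif_pos h, Dw, mkDerivation_X]

lemma iter_Dw_Xv {j : Fin k} {i q : ℕ} (h : i ≤ n j) (hq : q ≤ i) :
    (⇑(Dw 𝕜 k n))^[q] (Xv 𝕜 k n j i) = Xv 𝕜 k n j (i - q) := by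
  induction q with
  | zero => simp
  | succ q ih =>
      rw [Function.iterate_succ_apply', ih (Nat.le_of_succ_le hq),
        Dw_Xv (le_trans (Nat.sub_le _ _) h), if_neg, Nat.sub_sub]
      omega


/-- the flow `exp(tD)` applied to a point -/
def flow (t : 𝕜) (v : (Σ j : Fin k, Fin (n j + 1)) → 𝕜) : (Σ j : Fin k, Fin (n j + 1)) → 𝕜 :=
  fun p => ∑ q ∈ Finset.range ((p.2 : ℕ) + 1), t ^ q / (q.factorial : 𝕜) * uc v p.1 ((p.2 : ℕ) - q)

lemma flow_zero (v : (Σ j : Fin k, Fin (n j + 1)) → 𝕜) : flow 0 v = v := by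
  funext p
  rw [flow, Finset.sum_eq_single 0]
  · simpa using uc_eq p.1 p.2
  · intro q _ hq
    simp [zero_pow hq]
  · simp

/-- evaluation along the orbit, as a polynomial in `t` -/
noncomputable def psi (v : (Σ j : Fin k, Fin (n j + 1)) → 𝕜) :
    MvPolynomial (Σ j : Fin k, Fin (n j + 1)) 𝕜 →ₐ[𝕜] Polynomial 𝕜 :=
  aeval fun p => ∑ q ∈ Finset.range ((p.2 : ℕ) + 1),
    Polynomial.C (uc v p.1 ((p.2 : ℕ) - q) / (q.factorial : 𝕜)) * Polynomial.X ^ q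

lemma eval_psi (v : (Σ j : Fin k, Fin (n j + 1)) → 𝕜) (t : 𝕜)
    (f : MvPolynomial (Σ j : Fin k, Fin (n j + 1)) 𝕜) :
    Polynomial.eval t (psi v f) = eval (flow t v) f := by
  induction f using MvPolynomial.induction_on with
  | C a => simp [psi]
  | add f g hf hg => simp [map_add, hf, hg]
  | mul_X f p hf =>
      rw [map_mul, Polynomial.eval_mul, hf, map_mul, psi, aeval_X, eval_X]
      congr 1
      rw [Polynomial.eval_finset_sum, flow]
      refine Finset.sum_congr rfl fun q _ => ?_
      rw [Polynomial.eval_mul, Polynomial.eval_C, Polynomial.eval_pow, Polynomial.eval_X]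
      ring

lemma deriv_psi_X (v : (Σ j : Fin k, Fin (n j + 1)) → 𝕜) (p : Σ j : Fin k, Fin (n j + 1)) :
    Polynomial.derivative (psi v (X p)) = psi v (Dw 𝕜 k n (X p)) := by
  rw [Dw, mkDerivation_X, psi, aeval_X, Polynomial.derivative_sum]
  by_cases h0 : (p.2 : ℕ) = 0
  · rw [h0, if_pos rfl, map_zero, zero_add, Finset.sum_range_one, pow_zero, mul_one,
      Polynomial.derivative_C]
  · rw [if_neg h0, Xv, dif_pos (le_trans (Nat.sub_le _ _) (Nat.lt_succ_iff.mp p.2.isLt)),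
      aeval_X]
    have hco : (((p.2 : ℕ) - 1 : ℕ) : ℕ) + 1 = (p.2 : ℕ) := Nat.succ_pred_eq_of_pos (Nat.pos_of_ne_zero h0)
    rw [show (∑ q ∈ Finset.range (((p.2 : ℕ) - 1 : ℕ) + 1),
        Polynomial.C (uc v p.1 (((p.2 : ℕ) - 1 : ℕ) - q) / (q.factorial : 𝕜)) * Polynomial.X ^ q)
      = ∑ q ∈ Finset.range ((p.2 : ℕ)),
        Polynomial.C (uc v p.1 (((p.2 : ℕ) - 1 : ℕ) - q) / (q.factorial : 𝕜)) * Polynomial.X ^ q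
      from by rw [hco]]
    have : ∀ q ∈ Finset.range ((p.2 : ℕ) + 1),
        Polynomial.derivative (Polynomial.C (uc v p.1 ((p.2 : ℕ) - q) / (q.factorial : 𝕜)) * Polynomial.X ^ q)
        = Polynomial.C (uc v p.1 ((p.2 : ℕ) - q) / (q.factorial : 𝕜) * (q : 𝕜)) * Polynomial.X ^ (q - 1) := by
      intro q _
      rw [Polynomial.derivative_C_mul_X_pow]
    rw [Finset.sum_congr rfl this, Finset.sum_range_succ']
    simp only [Nat.cast_zero, mul_zero, Polynomial.C_0, zero_mul, add_zero]
    refine Finset.sum_congr rfl fun q hq => ?_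
    have h1 : (p.2 : ℕ) - (q + 1) = (p.2 : ℕ) - 1 - q := by omega
    have h2 : ((q + 1).factorial : 𝕜) = ((q + 1 : ℕ) : 𝕜) * (q.factorial : 𝕜) := by
      rw [Nat.factorial_succ]; push_cast; ring
    rw [h1, Nat.add_sub_cancel, h2]
    congr 1
    have hq1 : ((q + 1 : ℕ) : 𝕜) ≠ 0 := Nat.cast_ne_zero.mpr (Nat.succ_ne_zero q)
    have hqf : (q.factorial : 𝕜) ≠ 0 := Nat.cast_ne_zero.mpr (Nat.factorial_ne_zero q)
    have hq1' : (q : 𝕜) + 1 ≠ 0 := by exact_mod_cast hq1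
    push_cast
    congr 1
    field_simp

lemma deriv_psi (v : (Σ j : Fin k, Fin (n j + 1)) → 𝕜)
    (f : MvPolynomial (Σ j : Fin k, Fin (n j + 1)) 𝕜) :
    Polynomial.derivative (psi v f) = psi v (Dw 𝕜 k n f) := by
  induction f using MvPolynomial.induction_on with
  | C a => simp [psi, MvPolynomial.derivation_C]
  | add f g hf hg => simp [map_add, hf, hg]
  | mul_X f p hf =>
      rw [map_mul, Polynomial.derivative_mul, hf, deriv_psi_X v p,
        Derivation.leibniz, smul_eq_mul, smul_eq_mul, map_add, map_mul, map_mul]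
      ring

lemma eval_flow_invariant {f : MvPolynomial (Σ j : Fin k, Fin (n j + 1)) 𝕜}
    (hf : Dw 𝕜 k n f = 0) (t : 𝕜) (v : (Σ j : Fin k, Fin (n j + 1)) → 𝕜) :
    eval (flow t v) f = eval v f := by
  have h : Polynomial.derivative (psi v f) = 0 := by rw [deriv_psi, hf, map_zero]
  have hC := Polynomial.eq_C_of_derivative_eq_zero h
  calc eval (flow t v) f = Polynomial.eval t (psi v f) := (eval_psi v t f).symm
    _ = Polynomial.eval 0 (psi v f) := by rw [hC]; simp
    _ = eval (flow 0 v) f := eval_psi v 0 f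
    _ = eval v f := by rw [flow_zero]

lemma Dw_sP {j : Fin k} {i : ℕ} (h : 2 * i + 1 ≤ n j) :
    Dw 𝕜 k n (sP 𝕜 k n j i) = fP 𝕜 k n j i := by
  rcases Nat.eq_zero_or_pos i with hi | hi
  · subst hi
    rw [sP, if_pos rfl, fP, if_pos rfl, Dw_Xv (by omega), if_neg one_ne_zero]
  · rw [sP, if_neg hi.ne', fP, if_neg hi.ne', map_sum]
    set c : ℕ → 𝕜 := fun q => (-1 : 𝕜) ^ q * ((2 * i + 1 - 2 * q : ℕ) : 𝕜) / 2 with hc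
    have hterm : ∀ q ∈ Finset.range (i + 1),
        Dw 𝕜 k n (C (c q) * Xv 𝕜 k n j q * Xv 𝕜 k n j (2 * i + 1 - q))
        = C (c q) * ((if q = 0 then 0 else Xv 𝕜 k n j (q - 1)) * Xv 𝕜 k n j (2 * i + 1 - q)
             + Xv 𝕜 k n j q * Xv 𝕜 k n j (2 * i - q)) := by
      intro q hq
      have hq' : q ≤ i := Nat.lt_succ_iff.mp (Finset.mem_range.mp hq)
      have hDq : Dw 𝕜 k n (Xv 𝕜 k n j q) = if q = 0 then 0 else Xv 𝕜 k n j (q - 1) :=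
        Dw_Xv (by omega)
      have hDQ : Dw 𝕜 k n (Xv 𝕜 k n j (2 * i + 1 - q)) = Xv 𝕜 k n j (2 * i - q) := by
        rw [Dw_Xv (by omega), if_neg (by omega)]
        congr 1
        omega
      rw [Derivation.leibniz, Derivation.leibniz, MvPolynomial.derivation_C, smul_eq_mul,
        smul_eq_mul, smul_eq_mul, smul_eq_mul, mul_zero, add_zero, hDq, hDQ]
      ring
    rw [Finset.sum_congr rfl hterm]
    simp only [mul_add]
    rw [Finset.sum_add_distrib]
    have hA : (∑ q ∈ Finset.range (i + 1),
          C (c q) * ((if q = 0 then 0 else Xv 𝕜 k n j (q - 1)) * Xv 𝕜 k n j (2 * i + 1 - q)))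
        = ∑ q ∈ Finset.range i, C (c (q + 1)) * (Xv 𝕜 k n j q * Xv 𝕜 k n j (2 * i - q)) := by
      rw [Finset.sum_range_succ']
      rw [if_pos rfl, zero_mul, mul_zero, add_zero]
      refine Finset.sum_congr rfl fun q hq => ?_
      rw [if_neg (Nat.succ_ne_zero q), Nat.add_sub_cancel]
      have h2 : 2 * i + 1 - (q + 1) = 2 * i - q := by omega
      rw [h2]
    have hB : (∑ q ∈ Finset.range (i + 1), C (c q) * (Xv 𝕜 k n j q * Xv 𝕜 k n j (2 * i - q)))
        = (∑ q ∈ Finset.range i, C (c q) * (Xv 𝕜 k n j q * Xv 𝕜 k n j (2 * i - q)))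
          + C ((-1 : 𝕜) ^ i / 2) * Xv 𝕜 k n j i ^ 2 := by
      rw [Finset.sum_range_succ]
      congr 1
      have h2 : 2 * i - i = i := by omega
      have h3 : (2 * i + 1 - 2 * i : ℕ) = 1 := by omega
      rw [h2, hc]
      simp only [h3, Nat.cast_one, mul_one, sq]
    rw [hA, hB, ← add_assoc, ← Finset.sum_add_distrib]
    congr 1
    refine Finset.sum_congr rfl fun q hq => ?_
    have hqi : q < i := Finset.mem_range.mp hq
    rw [← add_mul, ← map_add]
    have hco : c (q + 1) + c q = (-1 : 𝕜) ^ q := by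
      show (-1 : 𝕜) ^ (q + 1) * ((2 * i + 1 - 2 * (q + 1) : ℕ) : 𝕜) / 2
          + (-1 : 𝕜) ^ q * ((2 * i + 1 - 2 * q : ℕ) : 𝕜) / 2 = (-1 : 𝕜) ^ q
      have e1 : ((2 * i + 1 - 2 * (q + 1) : ℕ) : 𝕜) = 2 * (i : 𝕜) - 2 * (q : 𝕜) - 1 := by
        rw [Nat.cast_sub (by omega : 2 * (q + 1) ≤ 2 * i + 1)]
        push_cast
        ring
      have e2 : ((2 * i + 1 - 2 * q : ℕ) : 𝕜) = 2 * (i : 𝕜) - 2 * (q : 𝕜) + 1 := by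
        rw [Nat.cast_sub (by omega : 2 * q ≤ 2 * i + 1)]
        push_cast
        ring
      rw [e1, e2]
      ring
    rw [hco, ← mul_assoc]

lemma eval_fP {v : (Σ j : Fin k, Fin (n j + 1)) → 𝕜} {j : Fin k} {i : ℕ}
    (h0 : ∀ q < i, uc v j q = 0) :
    eval v (fP 𝕜 k n j i) = 0 ↔ uc v j i = 0 := by
  rcases Nat.eq_zero_or_pos i with hi | hi
  · subst hi; rw [fP, if_pos rfl, eval_Xv]
  · rw [fP, if_neg hi.ne', map_add, map_sum]
    have hz : ∀ q ∈ Finset.range i,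
        eval v (C ((-1 : 𝕜) ^ q) * Xv 𝕜 k n j q * Xv 𝕜 k n j (2 * i - q)) = 0 := by
      intro q hq
      rw [map_mul, map_mul, eval_Xv, h0 q (Finset.mem_range.mp hq), mul_zero, zero_mul]
    rw [Finset.sum_eq_zero hz, zero_add, map_mul, map_pow, eval_Xv, eval_C]
    have h2 : ((-1 : 𝕜) ^ i / 2) ≠ 0 :=
      div_ne_zero (pow_ne_zero _ (neg_ne_zero.mpr one_ne_zero)) two_ne_zero
    rw [mul_eq_zero, or_iff_right h2, pow_eq_zero_iff (two_ne_zero)]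

lemma col_zero {w : (Σ j : Fin k, Fin (n j + 1)) → 𝕜} {j : Fin k} {M : ℕ}
    (hM : ∀ m, m ≤ M → eval w (fP 𝕜 k n j m) = 0) :
    ∀ q, q ≤ M → uc w j q = 0 := by
  intro q
  induction q using Nat.strong_induction_on with
  | _ q ih =>
    intro hq
    exact (eval_fP fun m hm => ih m hm (le_trans hm.le hq)).mp (hM q hq)

lemma flow_lower_zero {v : (Σ j : Fin k, Fin (n j + 1)) → 𝕜} {j : Fin k}
    {i : Fin (n j + 1)} (t : 𝕜) (h : ∀ q ≤ (i : ℕ), uc v j q = 0) :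
    flow t v ⟨j, i⟩ = 0 := by
  rw [flow]
  exact Finset.sum_eq_zero fun q hq => by
    rw [h _ (Nat.sub_le _ _), mul_zero]

lemma eval_eps {v : (Σ j : Fin k, Fin (n j + 1)) → 𝕜} {j : Fin k} {i : ℕ} (hi : i ≤ n j)
    {s : MvPolynomial (Σ j : Fin k, Fin (n j + 1)) 𝕜} (hc : eval v (Dw 𝕜 k n s) ≠ 0) :
    eval v (eps 𝕜 k n s (Xv 𝕜 k n j i) i)
      = (eval v (Dw 𝕜 k n s)) ^ i *
        flow (-(eval v s) / eval v (Dw 𝕜 k n s)) v ⟨j, ⟨i, Nat.lt_succ_of_le hi⟩⟩ := by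
  rw [eps, map_sum, flow, Finset.mul_sum]
  refine Finset.sum_congr rfl fun q hq => ?_
  have hqi : q ≤ i := Nat.lt_succ_iff.mp (Finset.mem_range.mp hq)
  rw [map_mul, map_mul, map_mul, iter_Dw_Xv hi hqi, eval_Xv, eval_C, map_pow, map_pow,
    ← pow_sub_mul_pow (eval v (Dw 𝕜 k n s)) hqi]
  have hfq : (q.factorial : 𝕜) ≠ 0 := Nat.cast_ne_zero.mpr (Nat.factorial_ne_zero q)
  field_simp
  have hcc : (eval v (Dw 𝕜 k n s)) ^ q * (eval v (Dw 𝕜 k n s))⁻¹ ^ q = 1 := by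
    rw [← mul_pow, mul_inv_cancel₀ hc, one_pow]
  linear_combination (-(uc v j (i - q) * eval v s ^ q * (-1) ^ q)) * hcc

lemma key (v w : (Σ j : Fin k, Fin (n j + 1)) → 𝕜)
    (hv : ∃ (j : Fin k) (i : ℕ), 2 * i + 1 ≤ n j ∧ uc v j i ≠ 0)
    (h1 : ∀ (j : Fin k) (i : ℕ), 2 * i ≤ n j →
      eval v (fP 𝕜 k n j i) = eval w (fP 𝕜 k n j i))
    (h2 : ∀ (j1 j2 : Fin k) (i1 i2 : ℕ), j1 < j2 → n j1 ≤ 2 * i1 → i1 ≤ n j1 →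
      2 * i2 + 1 ≤ n j2 →
      eval v (eps 𝕜 k n (sP 𝕜 k n j2 i2) (Xv 𝕜 k n j1 i1) i1)
        = eval w (eps 𝕜 k n (sP 𝕜 k n j2 i2) (Xv 𝕜 k n j1 i1) i1))
    (h3 : ∀ (j : Fin k) (i1 i2 : ℕ), 2 * i2 + 1 ≤ n j → i2 ≤ i1 → i1 ≤ n j →
      eval v (eps 𝕜 k n (sP 𝕜 k n j i2) (Xv 𝕜 k n j i1) i1)
        = eval w (eps 𝕜 k n (sP 𝕜 k n j i2) (Xv 𝕜 k n j i1) i1))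
    (h4 : ∀ (j1 j2 : Fin k) (i1 i2 : ℕ), j2 < j1 → i1 ≤ n j1 → 2 * i2 + 1 ≤ n j2 →
      eval v (eps 𝕜 k n (sP 𝕜 k n j2 i2) (Xv 𝕜 k n j1 i1) i1)
        = eval w (eps 𝕜 k n (sP 𝕜 k n j2 i2) (Xv 𝕜 k n j1 i1) i1))
    (f : MvPolynomial (Σ j : Fin k, Fin (n j + 1)) 𝕜) (hf : Dw 𝕜 k n f = 0) :
    eval v f = eval w f := by
  classical
  set J : Finset (Fin k) :=
    Finset.univ.filter (fun j => ∃ i : ℕ, 2 * i + 1 ≤ n j ∧ uc v j i ≠ 0) with hJ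
  have hJne : J.Nonempty := by
    obtain ⟨j, hj⟩ := hv
    exact ⟨j, by simp [hJ]; exact hj⟩
  obtain ⟨j₀, hj₀J, hj₀min⟩ := J.exists_min_image id hJne
  have hPj₀ : ∃ i : ℕ, 2 * i + 1 ≤ n j₀ ∧ uc v j₀ i ≠ 0 := by
    simpa [hJ] using hj₀J
  set i₀ := Nat.find hPj₀ with hi₀def
  obtain ⟨hi₀n, hi₀ne⟩ := Nat.find_spec hPj₀
  have hlow : ∀ q < i₀, uc v j₀ q = 0 := by
    intro q hq
    by_contra hne
    exact Nat.find_min hPj₀ hq ⟨by omega, hne⟩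
  have hmin' : ∀ j : Fin k, j < j₀ → ∀ i : ℕ, 2 * i + 1 ≤ n j → uc v j i = 0 := by
    intro j hj i hin
    by_contra hne
    have : j ∈ J := by simp [hJ]; exact ⟨i, hin, hne⟩
    exact absurd (hj₀min j this) (by simpa using hj)
  set c := eval v (fP 𝕜 k n j₀ i₀) with hcdef
  have hc : c ≠ 0 := fun h => hi₀ne ((eval_fP hlow).mp h)
  have hDs : Dw 𝕜 k n (sP 𝕜 k n j₀ i₀) = fP 𝕜 k n j₀ i₀ := Dw_sP hi₀n
  have hcv : eval v (Dw 𝕜 k n (sP 𝕜 k n j₀ i₀)) = c := by rw [hDs]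
  have hcw : eval w (Dw 𝕜 k n (sP 𝕜 k n j₀ i₀)) = c := by
    rw [hDs]; exact (h1 j₀ i₀ (by omega)).symm
  set tv := -(eval v (sP 𝕜 k n j₀ i₀)) / c with htv
  set tw := -(eval w (sP 𝕜 k n j₀ i₀)) / c with htw
  have cover : ∀ (j : Fin k) (i : Fin (n j + 1)),
      eval v (eps 𝕜 k n (sP 𝕜 k n j₀ i₀) (Xv 𝕜 k n j (i : ℕ)) (i : ℕ))
        = eval w (eps 𝕜 k n (sP 𝕜 k n j₀ i₀) (Xv 𝕜 k n j (i : ℕ)) (i : ℕ)) →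
      flow tv v ⟨j, i⟩ = flow tw w ⟨j, i⟩ := by
    intro j i he
    have hin : (i : ℕ) ≤ n j := Nat.lt_succ_iff.mp i.isLt
    have hv' := eval_eps (v := v) hin (s := sP 𝕜 k n j₀ i₀) (by rw [hcv]; exact hc)
    have hw' := eval_eps (v := w) hin (s := sP 𝕜 k n j₀ i₀) (by rw [hcw]; exact hc)
    rw [hcv] at hv'
    rw [hcw] at hw'
    rw [hv', hw'] at he
    simp only [Fin.eta] at he
    exact mul_left_cancel₀ (pow_ne_zero _ hc) he
  have hflow : flow tv v = flow tw w := by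
    funext p
    obtain ⟨j, i⟩ := p
    have hin : (i : ℕ) ≤ n j := Nat.lt_succ_iff.mp i.isLt
    rcases lt_trichotomy j j₀ with hlt | heq | hgt
    · by_cases hup : n j ≤ 2 * (i : ℕ)
      · exact cover j i (h2 j j₀ (i : ℕ) i₀ hlt hup hin hi₀n)
      · push_neg at hup
        have hvz : ∀ q ≤ (i : ℕ), uc v j q = 0 := fun q hq => hmin' j hlt q (by omega)
        have hwz : ∀ q ≤ (i : ℕ), uc w j q = 0 := by
          refine col_zero (M := (i : ℕ)) ?_
          intro m hm
          rw [← h1 j m (by omega)]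
          exact (eval_fP fun q hq => hmin' j hlt q (by omega)).mpr
            (hmin' j hlt m (by omega))
        rw [flow_lower_zero tv hvz, flow_lower_zero tw hwz]
    · subst heq
      by_cases hge : i₀ ≤ (i : ℕ)
      · exact cover j i (h3 j (i : ℕ) i₀ hi₀n hge hin)
      · push_neg at hge
        have hvz : ∀ q ≤ (i : ℕ), uc v j q = 0 := fun q hq => hlow q (by omega)
        have hwz : ∀ q ≤ (i : ℕ), uc w j q = 0 := by
          refine col_zero (M := (i : ℕ)) ?_
          intro m hm
          rw [← h1 j m (by omega)]
          exact (eval_fP fun q hq => hlow q (by omega)).mpr (hlow m (by omega))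
        rw [flow_lower_zero tv hvz, flow_lower_zero tw hwz]
    · exact cover j i (h4 j j₀ (i : ℕ) i₀ hgt hin hi₀n)
  calc eval v f = eval (flow tv v) f := (eval_flow_invariant hf tv v).symm
    _ = eval (flow tw w) f := by rw [hflow]
    _ = eval w f := eval_flow_invariant hf tw w

end Sep

theorem T'_separates_off_Z (𝕜 : Type) [Field 𝕜] [CharZero 𝕜] (k : ℕ) (hk : 2 ≤ k)
    (n : Fin k → ℕ)
    (T' : Set (MvPolynomial (Σ j : Fin k, Fin (n j + 1)) 𝕜))
    (hT' : T' =
      -- (1)  f_{i,j},  1 ≤ j ≤ k,  0 ≤ i ≤ ⌊n_j/2⌋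
      {p | ∃ (j : Fin k) (i : ℕ), 2 * i ≤ n j ∧ p = fP 𝕜 k n j i} ∪
      -- (2)  ε_{s_{i₂,j₂}}(x_{i₁,j₁}),  j₁ < j₂,  ⌊(n_{j₁}-1)/2⌋ < i₁ ≤ n_{j₁},
      --      0 ≤ i₂ ≤ ⌊(n_{j₂}-1)/2⌋  (note ν(x_{i₁,j₁}) = i₁)
      {p | ∃ (j1 j2 : Fin k) (i1 i2 : ℕ), j1 < j2 ∧ n j1 ≤ 2 * i1 ∧ i1 ≤ n j1 ∧
        2 * i2 + 1 ≤ n j2 ∧ p = eps 𝕜 k n (sP 𝕜 k n j2 i2) (Xv 𝕜 k n j1 i1) i1} ∪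
      -- (3)  ε_{s_{i₂,j}}(x_{i₁,j}),  0 ≤ i₂ ≤ ⌊(n_j-1)/2⌋,  i₂ ≤ i₁ ≤ n_j
      {p | ∃ (j : Fin k) (i1 i2 : ℕ), 2 * i2 + 1 ≤ n j ∧ i2 ≤ i1 ∧ i1 ≤ n j ∧
        p = eps 𝕜 k n (sP 𝕜 k n j i2) (Xv 𝕜 k n j i1) i1} ∪
      -- (4)  ε_{s_{i₂,j₂}}(x_{i₁,j₁}),  j₂ < j₁,  0 ≤ i₁ ≤ n_{j₁},  0 ≤ i₂ ≤ ⌊(n_{j₂}-1)/2⌋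
      {p | ∃ (j1 j2 : Fin k) (i1 i2 : ℕ), j2 < j1 ∧ i1 ≤ n j1 ∧ 2 * i2 + 1 ≤ n j2 ∧
        p = eps 𝕜 k n (sP 𝕜 k n j2 i2) (Xv 𝕜 k n j1 i1) i1})
    -- `Z` is the set of points with `a_{i,j} = 0` for all `0 ≤ i ≤ ⌊(n_j-1)/2⌋`
    (Z : Set ((Σ j : Fin k, Fin (n j + 1)) → 𝕜))
    (hZ : Z = {v | ∀ (j : Fin k) (i : Fin (n j + 1)), 2 * (i : ℕ) + 1 ≤ n j → v ⟨j, i⟩ = 0}) :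
    ∀ v w : (Σ j : Fin k, Fin (n j + 1)) → 𝕜, ¬(v ∈ Z ∧ w ∈ Z) →
      (∃ f, Dw 𝕜 k n f = 0 ∧ eval v f ≠ eval w f) →
      ∃ t ∈ T', eval v t ≠ eval w t := by
  intro v w hZvw hex
  by_contra hcon
  push_neg at hcon
  obtain ⟨f, hf, hne⟩ := hex
  subst hT'
  have H1 : ∀ (j : Fin k) (i : ℕ), 2 * i ≤ n j →
      eval v (fP 𝕜 k n j i) = eval w (fP 𝕜 k n j i) := fun j i hi =>
    hcon _ (Or.inl (Or.inl (Or.inl ⟨j, i, hi, rfl⟩)))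
  have H2 : ∀ (j1 j2 : Fin k) (i1 i2 : ℕ), j1 < j2 → n j1 ≤ 2 * i1 → i1 ≤ n j1 →
      2 * i2 + 1 ≤ n j2 →
      eval v (eps 𝕜 k n (sP 𝕜 k n j2 i2) (Xv 𝕜 k n j1 i1) i1)
        = eval w (eps 𝕜 k n (sP 𝕜 k n j2 i2) (Xv 𝕜 k n j1 i1) i1) :=
    fun j1 j2 i1 i2 ha hb hc' hd =>
    hcon _ (Or.inl (Or.inl (Or.inr ⟨j1, j2, i1, i2, ha, hb, hc', hd, rfl⟩)))
  have H3 : ∀ (j : Fin k) (i1 i2 : ℕ), 2 * i2 + 1 ≤ n j → i2 ≤ i1 → i1 ≤ n j →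
      eval v (eps 𝕜 k n (sP 𝕜 k n j i2) (Xv 𝕜 k n j i1) i1)
        = eval w (eps 𝕜 k n (sP 𝕜 k n j i2) (Xv 𝕜 k n j i1) i1) :=
    fun j i1 i2 ha hb hc' =>
    hcon _ (Or.inl (Or.inr ⟨j, i1, i2, ha, hb, hc', rfl⟩))
  have H4 : ∀ (j1 j2 : Fin k) (i1 i2 : ℕ), j2 < j1 → i1 ≤ n j1 → 2 * i2 + 1 ≤ n j2 →
      eval v (eps 𝕜 k n (sP 𝕜 k n j2 i2) (Xv 𝕜 k n j1 i1) i1)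
        = eval w (eps 𝕜 k n (sP 𝕜 k n j2 i2) (Xv 𝕜 k n j1 i1) i1) :=
    fun j1 j2 i1 i2 ha hb hc' =>
    hcon _ (Or.inr ⟨j1, j2, i1, i2, ha, hb, hc', rfl⟩)
  have hvw : (∃ (j : Fin k) (i : ℕ), 2 * i + 1 ≤ n j ∧ Sep.uc v j i ≠ 0) ∨
      (∃ (j : Fin k) (i : ℕ), 2 * i + 1 ≤ n j ∧ Sep.uc w j i ≠ 0) := by
    by_contra hno
    push_neg at hno
    obtain ⟨hnv, hnw⟩ := hno
    refine hZvw ⟨?_, ?_⟩ <;> rw [hZ]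
    · intro j i hji
      rw [← Sep.uc_eq (v := v) j i]
      exact hnv j (i : ℕ) hji
    · intro j i hji
      rw [← Sep.uc_eq (v := w) j i]
      exact hnw j (i : ℕ) hji
  rcases hvw with hwit | hwit
  · exact hne (Sep.key v w hwit H1 H2 H3 H4 f hf)
  · exact hne ((Sep.key w v hwit
      (fun j i hi => (H1 j i hi).symm)
      (fun j1 j2 i1 i2 a b c' d => (H2 j1 j2 i1 i2 a b c' d).symm)
      (fun j i1 i2 a b c' => (H3 j i1 i2 a b c').symm)
      (fun j1 j2 i1 i2 a b c' => (H4 j1 j2 i1 i2 a b c').symm)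
      f hf).symm)
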